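/- arXiv:2107.14327 — 6 statements merged into one kernel-verified Lean document; each statement's English description precedes it below -/
import Mathlib

section
/- If F is a continuous CDF of a nonnegative random variable with finite mean, and the price p is itself drawn from F (independently of B and S), then E_{p∼F}[GFT(p,F)] = (1/2)·∫_0^∞ F(x)(1-F(x)) dx, i.e., posting a random sample from F as the price achieves exactly half of the optimal gains from trade E[(B-S)_+]. -/
open MeasureTheory Set Filter
open scoped ENNReal

lemma aux_atom (μ : Measure ℝ) [IsProbabilityMeasure μ]
    (F : ℝ → ℝ) (hF : ∀ x, F x = (μ (Set.Iic x)).toReal) (hcont : Continuous F) :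
    ∀ x : ℝ, μ {x} = 0 := by
  intro x
  have hof : ∀ y, μ (Iic y) = ENNReal.ofReal (F y) := by
    intro y; rw [hF, ENNReal.ofReal_toReal (measure_ne_top _ _)]
  have hmono : Monotone fun n : ℕ => Iic (x - 1 / (n + 1)) := by
    intro m n hmn
    apply Iic_subset_Iic.2
    have : (1:ℝ) / (n + 1) ≤ 1 / (m + 1) := by
      apply one_div_le_one_div_of_le <;> [positivity; exact_mod_cast by omega]
    linarith
  have hUnion : (⋃ n : ℕ, Iic (x - 1 / (n + 1))) = Iio x := by
    ext y
    simp only [mem_iUnion, mem_Iic, mem_Iio]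
    constructor
    · rintro ⟨n, hn⟩
      have : (0:ℝ) < 1 / (n + 1) := by positivity
      linarith
    · intro hy
      obtain ⟨n, hn⟩ := exists_nat_one_div_lt (by linarith : (0:ℝ) < x - y)
      exact ⟨n, by linarith⟩
  have h1 : Tendsto (fun n : ℕ => μ (Iic (x - 1 / (n + 1)))) atTop (nhds (μ (Iio x))) := by
    have := tendsto_measure_iUnion_atTop (μ := μ) hmono
    rwa [hUnion] at this
  have h2 : Tendsto (fun n : ℕ => μ (Iic (x - 1 / (n + 1)))) atTop (nhds (μ (Iic x))) := by
    simp only [hof]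
    apply (ENNReal.continuous_ofReal.tendsto _).comp
    apply (hcont.tendsto _).comp
    have : Tendsto (fun n : ℕ => (1:ℝ) / (n + 1)) atTop (nhds 0) :=
      tendsto_one_div_add_atTop_nhds_zero_nat
    have := (tendsto_const_nhds (x := x) (f := atTop)).sub this
    simpa using this
  have heq : μ (Iio x) = μ (Iic x) := tendsto_nhds_unique h1 h2
  have hsplit : μ (Iic x) = μ (Iio x) + μ {x} := by
    rw [← Iio_union_right, measure_union (by simp) (measurableSet_singleton x)]
  rw [heq] at hsplit
  nth_rewrite 1 [show μ (Iic x) = μ (Iic x) + 0 by simp] at hsplit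
  exact ((ENNReal.add_right_inj (a := μ (Iic x)) (b := 0) (measure_ne_top μ (Iic x))).1 hsplit).symm

lemma aux_diag (μ : Measure ℝ) [IsProbabilityMeasure μ] [NullSingletonClass μ] :
    μ.prod μ {q : ℝ × ℝ | q.1 = q.2} = 0 := by
  rw [Measure.prod_apply (measurableSet_eq_fun measurable_fst measurable_snd)]
  have : ∀ p : ℝ, (Prod.mk p ⁻¹' {q : ℝ × ℝ | q.1 = q.2}) = {p} := by
    intro p; ext y; simp [eq_comm]
  simp [this]

lemma aux_K1 (μ : Measure ℝ) [IsProbabilityMeasure μ] [NullSingletonClass μ] (x : ℝ) :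
    ∫⁻ p in Iio x, μ (Iic p) ∂μ = (μ (Iic x)) ^ 2 / 2 := by
  set A : Set (ℝ × ℝ) := {q | q.1 < x ∧ q.2 ≤ q.1} with hA_def
  set B : Set (ℝ × ℝ) := {q | q.2 < x ∧ q.1 ≤ q.2} with hB_def
  have hA : MeasurableSet A :=
    (measurableSet_lt measurable_fst measurable_const).inter
      (measurableSet_le measurable_snd measurable_fst)
  have hB : MeasurableSet B :=
    (measurableSet_lt measurable_snd measurable_const).inter
      (measurableSet_le measurable_fst measurable_snd)
  have hAval : μ.prod μ A = ∫⁻ p in Iio x, μ (Iic p) ∂μ := by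
    rw [Measure.prod_apply hA, ← lintegral_indicator measurableSet_Iio]
    apply lintegral_congr
    intro p
    by_cases hp : p < x
    · have : Prod.mk p ⁻¹' A = Iic p := by ext y; simp [hA_def, hp]
      simp [this, Set.indicator_of_mem, hp, mem_Iio]
    · have : Prod.mk p ⁻¹' A = ∅ := by ext y; simp [hA_def, hp]
      simp [this, Set.indicator_of_notMem, hp, mem_Iio]
  have hBA : μ.prod μ B = μ.prod μ A := by
    have : B = Prod.swap ⁻¹' A := by ext q; simp [hA_def, hB_def, and_comm]
    rw [this, ← Measure.map_apply measurable_swap hA, Measure.prod_swap]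
  have hunion : A ∪ B = Iio x ×ˢ Iio x := by
    ext ⟨p, q⟩
    simp only [hA_def, hB_def, mem_union, mem_setOf_eq, mem_prod, mem_Iio]
    constructor
    · rintro (⟨h1, h2⟩ | ⟨h1, h2⟩) <;> constructor <;> linarith
    · rintro ⟨h1, h2⟩
      rcases le_total q p with h | h
      · exact Or.inl ⟨h1, h⟩
      · exact Or.inr ⟨h2, h⟩
  have hinter : μ.prod μ (A ∩ B) = 0 := by
    apply measure_mono_null _ (aux_diag μ)
    rintro ⟨p, q⟩ ⟨⟨_, h2⟩, ⟨_, h4⟩⟩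
    exact le_antisymm h4 h2
  have hsum : μ.prod μ A + μ.prod μ B = (μ (Iic x)) ^ 2 := by
    have := measure_union_add_inter (μ := μ.prod μ) A hB
    rw [hunion, hinter, add_zero, Measure.prod_prod,
      measure_congr Iio_ae_eq_Iic, ← sq] at this
    exact this.symm
  rw [← hAval]
  rw [hBA, ← two_mul] at hsum
  rw [← hsum, mul_comm, mul_div_assoc,
    ENNReal.div_self (by norm_num) (by norm_num), mul_one]

lemma aux_K2 (μ : Measure ℝ) [IsProbabilityMeasure μ] [NullSingletonClass μ] (x : ℝ) :
    ∫⁻ p in Ici x, μ (Ioi p) ∂μ = (μ (Ioi x)) ^ 2 / 2 := by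
  set A : Set (ℝ × ℝ) := {q | x ≤ q.1 ∧ q.1 < q.2} with hA_def
  set B : Set (ℝ × ℝ) := {q | x ≤ q.2 ∧ q.2 < q.1} with hB_def
  have hA : MeasurableSet A :=
    (measurableSet_le measurable_const measurable_fst).inter
      (measurableSet_lt measurable_fst measurable_snd)
  have hB : MeasurableSet B :=
    (measurableSet_le measurable_const measurable_snd).inter
      (measurableSet_lt measurable_snd measurable_fst)
  have hAval : μ.prod μ A = ∫⁻ p in Ici x, μ (Ioi p) ∂μ := by
    rw [Measure.prod_apply hA, ← lintegral_indicator measurableSet_Ici]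
    apply lintegral_congr
    intro p
    by_cases hp : x ≤ p
    · have : Prod.mk p ⁻¹' A = Ioi p := by ext y; simp [hA_def, hp]
      simp [this, hp, mem_Ici]
    · have : Prod.mk p ⁻¹' A = ∅ := by ext y; simp [hA_def, hp]
      simp [this, hp, mem_Ici]
  have hBA : μ.prod μ B = μ.prod μ A := by
    have : B = Prod.swap ⁻¹' A := by ext q; simp [hA_def, hB_def]
    rw [this, ← Measure.map_apply measurable_swap hA, Measure.prod_swap]
  have hdisj : Disjoint A B := by
    rw [Set.disjoint_left]
    rintro ⟨p, q⟩ ⟨_, h2⟩ ⟨_, h4⟩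
    exact absurd (h2.trans h4) (lt_irrefl _)
  have hae : (A ∪ B : Set (ℝ × ℝ)) =ᵐ[μ.prod μ] (Ici x ×ˢ Ici x : Set (ℝ × ℝ)) := by
    rw [ae_eq_set]
    constructor
    · apply measure_mono_null _ (aux_diag μ)
      · rintro ⟨p, q⟩ ⟨hpq, hn⟩
        exfalso
        apply hn
        rcases hpq with ⟨h1, h2⟩ | ⟨h1, h2⟩
        · exact ⟨h1, h1.trans h2.le⟩
        · exact ⟨h1.trans h2.le, h1⟩
    · apply measure_mono_null _ (aux_diag μ)
      rintro ⟨p, q⟩ ⟨⟨h1, h2⟩, hn⟩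
      simp only [hA_def, hB_def, mem_union, mem_setOf_eq, not_or, not_and, not_lt] at hn
      exact le_antisymm (hn.2 h2) (hn.1 h1)
  have hsum : 2 * μ.prod μ A = (μ (Ioi x)) ^ 2 := by
    have h1 : μ.prod μ (A ∪ B) = μ.prod μ A + μ.prod μ B := measure_union hdisj hB
    rw [measure_congr hae, Measure.prod_prod, measure_congr Ioi_ae_eq_Ici.symm, ← sq] at h1
    rw [hBA, ← two_mul] at h1
    exact h1.symm
  rw [← hAval, ← hsum, mul_comm, mul_div_assoc,
    ENNReal.div_self (by norm_num) (by norm_num), mul_one]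

lemma aux_mIic (μ : Measure ℝ) : Measurable fun y : ℝ => μ (Iic y) :=
  Monotone.measurable (fun a b hab => measure_mono (Iic_subset_Iic.2 hab))

lemma aux_mIoi (μ : Measure ℝ) : Measurable fun y : ℝ => μ (Ioi y) :=
  Antitone.measurable (fun a b hab => measure_mono (Ioi_subset_Ioi hab))

lemma aux_term1 (μ : Measure ℝ) [IsProbabilityMeasure μ] [NullSingletonClass μ] :
    ∫⁻ p, μ (Iic p) * ∫⁻ x in Ioi p, μ (Ioi x) ∂volume ∂μ
      = ∫⁻ x, μ (Ioi x) * ((μ (Iic x)) ^ 2 / 2) ∂volume := by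
  set g1 : ℝ × ℝ → ℝ≥0∞ :=
    fun q => Set.indicator {q : ℝ × ℝ | q.1 < q.2} (fun q => μ (Iic q.1) * μ (Ioi q.2)) q
    with hg1_def
  have hg1 : Measurable g1 :=
    Measurable.indicator
      (((aux_mIic μ).comp measurable_fst).mul ((aux_mIoi μ).comp measurable_snd))
      (measurableSet_lt measurable_fst measurable_snd)
  have step_a : ∀ p, μ (Iic p) * ∫⁻ x in Ioi p, μ (Ioi x) ∂volume
      = ∫⁻ x, g1 (p, x) ∂volume := by
    intro p
    rw [← lintegral_const_mul _ (aux_mIoi μ), ← lintegral_indicator measurableSet_Ioi]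
    apply lintegral_congr
    intro y
    by_cases hy : p < y <;> simp [hg1_def, Set.indicator_apply, hy, mem_Ioi]
  have step_b : ∫⁻ p, ∫⁻ x, g1 (p, x) ∂volume ∂μ = ∫⁻ x, ∫⁻ p, g1 (p, x) ∂μ ∂volume := by
    apply lintegral_lintegral_swap
    exact (hg1.comp (measurable_fst.prodMk measurable_snd)).aemeasurable
  have step_c : ∀ x, ∫⁻ p, g1 (p, x) ∂μ = μ (Ioi x) * ((μ (Iic x)) ^ 2 / 2) := by
    intro x
    have : ∀ p, g1 (p, x) = Set.indicator (Iio x) (fun p => μ (Iic p) * μ (Ioi x)) p := by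
      intro p
      by_cases hp : p < x <;> simp [hg1_def, Set.indicator_apply, hp, mem_Iio]
    simp_rw [this]
    rw [lintegral_indicator measurableSet_Iio, lintegral_mul_const _ (aux_mIic μ),
      aux_K1 μ x, mul_comm]
  simp_rw [step_a, step_b, step_c]

lemma aux_term2 (μ : Measure ℝ) [IsProbabilityMeasure μ] [NullSingletonClass μ] :
    ∫⁻ p, μ (Ioi p) * ∫⁻ x in Ioc (0:ℝ) p, μ (Iic x) ∂volume ∂μ
      = ∫⁻ x, Set.indicator (Ioi (0:ℝ))
          (fun x => μ (Iic x) * ((μ (Ioi x)) ^ 2 / 2)) x ∂volume := by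
  set g2 : ℝ × ℝ → ℝ≥0∞ :=
    fun q => Set.indicator {q : ℝ × ℝ | 0 < q.2 ∧ q.2 ≤ q.1}
      (fun q => μ (Ioi q.1) * μ (Iic q.2)) q with hg2_def
  have hg2 : Measurable g2 :=
    Measurable.indicator
      (((aux_mIoi μ).comp measurable_fst).mul ((aux_mIic μ).comp measurable_snd))
      (((measurableSet_lt measurable_const measurable_snd)).inter
        (measurableSet_le measurable_snd measurable_fst))
  have step_a : ∀ p, μ (Ioi p) * ∫⁻ x in Ioc (0:ℝ) p, μ (Iic x) ∂volume
      = ∫⁻ x, g2 (p, x) ∂volume := by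
    intro p
    rw [← lintegral_const_mul _ (aux_mIic μ), ← lintegral_indicator measurableSet_Ioc]
    apply lintegral_congr
    intro y
    by_cases hy : 0 < y ∧ y ≤ p <;> simp [hg2_def, Set.indicator_apply, hy, mem_Ioc]
  have step_b : ∫⁻ p, ∫⁻ x, g2 (p, x) ∂volume ∂μ = ∫⁻ x, ∫⁻ p, g2 (p, x) ∂μ ∂volume := by
    apply lintegral_lintegral_swap
    exact (hg2.comp (measurable_fst.prodMk measurable_snd)).aemeasurable
  have step_c : ∀ x, ∫⁻ p, g2 (p, x) ∂μ
      = Set.indicator (Ioi (0:ℝ)) (fun x => μ (Iic x) * ((μ (Ioi x)) ^ 2 / 2)) x := by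
    intro x
    by_cases hx : 0 < x
    · have : ∀ p, g2 (p, x) = Set.indicator (Ici x) (fun p => μ (Ioi p) * μ (Iic x)) p := by
        intro p
        by_cases hp : x ≤ p <;> simp [hg2_def, Set.indicator_apply, hp, hx, mem_Ici]
      simp_rw [this]
      rw [lintegral_indicator measurableSet_Ici, lintegral_mul_const _ (aux_mIoi μ),
        aux_K2 μ x, Set.indicator_of_mem (mem_Ioi.2 hx), mul_comm]
    · have : ∀ p, g2 (p, x) = 0 := by
        intro p; simp [hg2_def, Set.indicator_apply, hx]
      simp [this, Set.indicator_of_notMem, hx, mem_Ioi]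
  simp_rw [step_a, step_b, step_c]

lemma aux_nn (μ : Measure ℝ) (hsupp : μ (Set.Iio 0) = 0) : 0 ≤ᵐ[μ] (id : ℝ → ℝ) := by
  rw [Filter.EventuallyLE, ae_iff]
  have : {a : ℝ | ¬ (0:ℝ → ℝ) a ≤ id a} = Iio 0 := by ext y; simp [not_le]
  rw [this]; exact hsupp

lemma aux_layer (μ : Measure ℝ) [IsProbabilityMeasure μ]
    (hsupp : μ (Set.Iio 0) = 0) (hmean : Integrable id μ) :
    ∫⁻ x in Ioi (0:ℝ), μ (Ioi x) ∂volume ≠ ∞ := by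
  have key := lintegral_eq_lintegral_meas_lt μ (aux_nn μ hsupp) aemeasurable_id
  have hset : ∀ t : ℝ, {a : ℝ | t < id a} = Ioi t := fun t => rfl
  simp_rw [hset] at key
  rw [← key]
  have hle : ∫⁻ ω, ENNReal.ofReal (id ω) ∂μ < ∞ :=
    (hasFiniteIntegral_iff_ofReal (aux_nn μ hsupp)).1 hmean.2
  exact hle.ne

lemma aux_max (μ : Measure ℝ) [IsProbabilityMeasure μ] [NullSingletonClass μ] :
    ∫⁻ q : ℝ × ℝ, ENNReal.ofReal (max (q.1 - q.2) 0) ∂(μ.prod μ)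
      = ∫⁻ x, μ (Iic x) * μ (Ioi x) ∂volume := by
  have h1 : ∀ q : ℝ × ℝ, ENNReal.ofReal (max (q.1 - q.2) 0)
      = ∫⁻ x, Set.indicator {r : ℝ × ℝ × ℝ | r.2.2 < r.1 ∧ r.1 ≤ r.2.1}
          (fun _ => (1:ℝ≥0∞)) (x, q) ∂volume := by
    intro q
    have : ∀ x : ℝ, Set.indicator {r : ℝ × ℝ × ℝ | r.2.2 < r.1 ∧ r.1 ≤ r.2.1}
        (fun _ => (1:ℝ≥0∞)) (x, q) = Set.indicator (Ioc q.2 q.1) (fun _ => (1:ℝ≥0∞)) x := by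
      intro x
      by_cases hx : q.2 < x ∧ x ≤ q.1 <;> simp [Set.indicator_apply, hx, mem_Ioc]
    simp_rw [this]
    rw [lintegral_indicator measurableSet_Ioc, setLIntegral_one, Real.volume_Ioc]
    rcases le_total (q.1 - q.2) 0 with h | h
    · rw [max_eq_right h, ENNReal.ofReal_eq_zero.2 h, ENNReal.ofReal_eq_zero.2 le_rfl]
    · rw [max_eq_left h]
  have hS : MeasurableSet {r : ℝ × ℝ × ℝ | r.2.2 < r.1 ∧ r.1 ≤ r.2.1} :=
    (measurableSet_lt measurable_snd.snd measurable_fst).inter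
      (measurableSet_le measurable_fst measurable_snd.fst)
  have hmeas : Measurable (Function.uncurry fun (q : ℝ × ℝ) (x : ℝ) =>
      Set.indicator {r : ℝ × ℝ × ℝ | r.2.2 < r.1 ∧ r.1 ≤ r.2.1}
        (fun _ => (1:ℝ≥0∞)) (x, q)) :=
    (Measurable.indicator measurable_const hS).comp
      (measurable_snd.prodMk measurable_fst)
  simp_rw [h1]
  rw [lintegral_lintegral_swap hmeas.aemeasurable]
  · apply lintegral_congr
    intro x
    have : ∀ q : ℝ × ℝ, Set.indicator {r : ℝ × ℝ × ℝ | r.2.2 < r.1 ∧ r.1 ≤ r.2.1}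
        (fun _ => (1:ℝ≥0∞)) (x, q) = Set.indicator (Ici x ×ˢ Iio x) (fun _ => (1:ℝ≥0∞)) q := by
      intro q
      by_cases hq : x ∈ Ioc q.2 q.1
      · rw [Set.indicator_of_mem (by exact ⟨hq.1, hq.2⟩ : (x, q) ∈ _),
          Set.indicator_of_mem (by exact ⟨hq.2, hq.1⟩)]
      · rw [mem_Ioc, not_and_or] at hq
        rw [Set.indicator_of_notMem, Set.indicator_of_notMem]
        · rintro ⟨ha, hb⟩; rcases hq with h | h
          · exact h hb
          · exact h ha
        · rintro ⟨ha, hb⟩; rcases hq with h | h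
          · exact h ha
          · exact h hb
    simp_rw [this]
    rw [lintegral_indicator ((measurableSet_Ici).prod measurableSet_Iio), setLIntegral_one,
      Measure.prod_prod, measure_congr Ioi_ae_eq_Ici.symm, measure_congr Iio_ae_eq_Iic,
      mul_comm]

lemma aux_alg (a b : ℝ≥0∞) (hab : a + b = 1) :
    b * (a ^ 2 / 2) + a * (b ^ 2 / 2) = a * b / 2 := by
  have h : b * (a ^ 2 / 2) + a * (b ^ 2 / 2) = a * b / 2 * (a + b) := by
    simp only [div_eq_mul_inv]; ring
  rw [h, hab, mul_one]

/-- If `F` is a continuous CDF of a nonnegative random variable with finite mean, and the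
price `p` is itself drawn from `F`, then `E_{p∼F}[GFT(p,F)] = (1/2)·∫_0^∞ F(x)(1-F(x)) dx`,
i.e., posting a random sample from `F` as the price achieves exactly half of the optimal
gains from trade `E[(B-S)_+]`. -/
theorem stmt_2 (μ : Measure ℝ) [IsProbabilityMeasure μ]
    (hsupp : μ (Set.Iio 0) = 0) (hmean : Integrable id μ)
    (F : ℝ → ℝ) (hF : ∀ x, F x = (μ (Set.Iic x)).toReal) (hcont : Continuous F) :
    (∫ p, (F p * (∫ x in Set.Ioi p, (1 - F x))
        + (1 - F p) * (∫ x in Set.Ioc (0:ℝ) p, F x)) ∂μ)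
      = (1/2) * ∫ x in Set.Ioi (0:ℝ), F x * (1 - F x)
    ∧ (∫ p, (F p * (∫ x in Set.Ioi p, (1 - F x))
        + (1 - F p) * (∫ x in Set.Ioc (0:ℝ) p, F x)) ∂μ)
      = (1/2) * ∫ q : ℝ × ℝ, max (q.1 - q.2) 0 ∂(μ.prod μ) := by
  haveI : NullSingletonClass μ := ⟨aux_atom μ F hF hcont⟩
  have hFeq : ∀ x, ENNReal.ofReal (F x) = μ (Iic x) := fun x => by
    rw [hF, ENNReal.ofReal_toReal (measure_ne_top _ _)]
  have hF0 : ∀ x, 0 ≤ F x := fun x => by rw [hF]; exact ENNReal.toReal_nonneg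
  have hFle : ∀ x, F x ≤ 1 := fun x => by
    rw [hF]
    calc (μ (Iic x)).toReal ≤ (1 : ℝ≥0∞).toReal :=
          ENNReal.toReal_mono (by norm_num) prob_le_one
      _ = 1 := by simp
  have h1Feq : ∀ x, ENNReal.ofReal (1 - F x) = μ (Ioi x) := by
    intro x
    have hc : μ (Ioi x) = 1 - μ (Iic x) := by
      rw [← compl_Iic, measure_compl measurableSet_Iic (measure_ne_top _ _), measure_univ]
    rw [ENNReal.ofReal_sub _ (hF0 x), ENNReal.ofReal_one, hFeq, hc]
  have hlayer := aux_layer μ hsupp hmean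
  have hTfin : ∀ p : ℝ, ∫⁻ x in Ioi p, μ (Ioi x) ∂volume ≠ ∞ := by
    intro p
    have hsub : Ioi p ⊆ Ioc p 0 ∪ Ioi 0 := by
      intro x hx
      rcases le_or_gt x 0 with h | h
      · exact Or.inl ⟨hx, h⟩
      · exact Or.inr h
    have hb : ∫⁻ x in Ioi p, μ (Ioi x) ∂volume
        ≤ (∫⁻ x in Ioc p 0, μ (Ioi x) ∂volume) + ∫⁻ x in Ioi 0, μ (Ioi x) ∂volume :=
      le_trans (lintegral_mono_set hsub) (lintegral_union_le _ _ _)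
    have h1 : ∫⁻ x in Ioc p 0, μ (Ioi x) ∂volume ≤ volume (Ioc p 0) := by
      rw [← setLIntegral_one]
      exact lintegral_mono fun x => prob_le_one
    exact (lt_of_le_of_lt hb (ENNReal.add_lt_top.2
      ⟨lt_of_le_of_lt h1 (by rw [Real.volume_Ioc]; exact ENNReal.ofReal_lt_top),
        hlayer.lt_top⟩)).ne
  have hUfin : ∀ p : ℝ, ∫⁻ x in Ioc (0:ℝ) p, μ (Iic x) ∂volume ≠ ∞ := by
    intro p
    have h1 : ∫⁻ x in Ioc (0:ℝ) p, μ (Iic x) ∂volume ≤ volume (Ioc (0:ℝ) p) := by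
      rw [← setLIntegral_one]; exact lintegral_mono fun x => prob_le_one
    exact (lt_of_le_of_lt h1 (by rw [Real.volume_Ioc]; exact ENNReal.ofReal_lt_top)).ne
  have hTnn : ∀ p : ℝ, 0 ≤ ∫ x in Ioi p, (1 - F x) :=
    fun p => setIntegral_nonneg measurableSet_Ioi fun x _ => by linarith [hFle x]
  have hUnn : ∀ p : ℝ, 0 ≤ ∫ x in Ioc (0:ℝ) p, F x :=
    fun p => setIntegral_nonneg measurableSet_Ioc fun x _ => hF0 x
  have hT : ∀ p : ℝ, ENNReal.ofReal (∫ x in Ioi p, (1 - F x))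
      = ∫⁻ x in Ioi p, μ (Ioi x) ∂volume := by
    intro p
    rw [integral_eq_lintegral_of_nonneg_ae (f := fun x => 1 - F x)
      (ae_of_all _ fun x => by simpa using sub_nonneg.2 (hFle x))
      (continuous_const.sub hcont).aestronglyMeasurable]
    rw [show ∫⁻ x in Ioi p, ENNReal.ofReal (1 - F x) ∂volume
        = ∫⁻ x in Ioi p, μ (Ioi x) ∂volume from lintegral_congr fun x => h1Feq x]
    exact ENNReal.ofReal_toReal (hTfin p)
  have hU : ∀ p : ℝ, ENNReal.ofReal (∫ x in Ioc (0:ℝ) p, F x)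
      = ∫⁻ x in Ioc (0:ℝ) p, μ (Iic x) ∂volume := by
    intro p
    rw [integral_eq_lintegral_of_nonneg_ae (f := fun x => F x)
      (ae_of_all _ fun x => by simpa using hF0 x) hcont.aestronglyMeasurable]
    rw [show ∫⁻ x in Ioc (0:ℝ) p, ENNReal.ofReal (F x) ∂volume
        = ∫⁻ x in Ioc (0:ℝ) p, μ (Iic x) ∂volume from lintegral_congr fun x => hFeq x]
    exact ENNReal.ofReal_toReal (hUfin p)
  have hmeasT : Measurable fun p : ℝ => ∫⁻ x in Ioi p, μ (Ioi x) ∂volume :=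
    Antitone.measurable fun a b hab => lintegral_mono_set (Ioi_subset_Ioi hab)
  have hmeasU : Measurable fun p : ℝ => ∫⁻ x in Ioc (0:ℝ) p, μ (Iic x) ∂volume :=
    Monotone.measurable fun a b hab => lintegral_mono_set (Ioc_subset_Ioc_right hab)
  have hTmeas : Measurable fun p : ℝ => ∫ x in Ioi p, (1 - F x) := by
    have heq : (fun p : ℝ => ∫ x in Ioi p, (1 - F x))
        = fun p => (∫⁻ x in Ioi p, μ (Ioi x) ∂volume).toReal := by
      funext p; rw [← hT p, ENNReal.toReal_ofReal (hTnn p)]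
    rw [heq]; exact ENNReal.measurable_toReal.comp hmeasT
  have hUmeas : Measurable fun p : ℝ => ∫ x in Ioc (0:ℝ) p, F x := by
    have heq : (fun p : ℝ => ∫ x in Ioc (0:ℝ) p, F x)
        = fun p => (∫⁻ x in Ioc (0:ℝ) p, μ (Iic x) ∂volume).toReal := by
      funext p; rw [← hU p, ENNReal.toReal_ofReal (hUnn p)]
    rw [heq]; exact ENNReal.measurable_toReal.comp hmeasU
  have hGnn : ∀ p : ℝ, 0 ≤ F p * (∫ x in Ioi p, (1 - F x))
      + (1 - F p) * (∫ x in Ioc (0:ℝ) p, F x) := fun p =>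
    add_nonneg (mul_nonneg (hF0 p) (hTnn p))
      (mul_nonneg (by linarith [hFle p]) (hUnn p))
  have hGsm : AEStronglyMeasurable (fun p : ℝ => F p * (∫ x in Ioi p, (1 - F x))
      + (1 - F p) * (∫ x in Ioc (0:ℝ) p, F x)) μ :=
    (((hcont.measurable).mul hTmeas).add
      (((continuous_const.sub hcont).measurable).mul hUmeas)).aestronglyMeasurable
  have hLHS1 : (∫ p, (F p * (∫ x in Ioi p, (1 - F x))
      + (1 - F p) * (∫ x in Ioc (0:ℝ) p, F x)) ∂μ)
      = (∫⁻ p, (μ (Iic p) * (∫⁻ x in Ioi p, μ (Ioi x) ∂volume)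
          + μ (Ioi p) * (∫⁻ x in Ioc (0:ℝ) p, μ (Iic x) ∂volume)) ∂μ).toReal := by
    rw [integral_eq_lintegral_of_nonneg_ae (ae_of_all _ fun p => by simpa using hGnn p) hGsm]
    congr 1
    apply lintegral_congr
    intro p
    rw [ENNReal.ofReal_add (mul_nonneg (hF0 p) (hTnn p))
        (mul_nonneg (by linarith [hFle p]) (hUnn p)),
      ENNReal.ofReal_mul (hF0 p), ENNReal.ofReal_mul (by linarith [hFle p] : 0 ≤ 1 - F p),
      hFeq, h1Feq, hT, hU]
  set I : ℝ≥0∞ := ∫⁻ x in Ioi (0:ℝ), μ (Iic x) * μ (Ioi x) ∂volume with hI_def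
  have hIfin : I ≠ ∞ := by
    refine ne_top_of_le_ne_top hlayer ?_
    apply lintegral_mono
    intro x
    calc μ (Iic x) * μ (Ioi x) ≤ 1 * μ (Ioi x) := mul_le_mul' prob_le_one le_rfl
      _ = μ (Ioi x) := one_mul _
  have hae0 : ∀ᵐ x ∂(volume : Measure ℝ), x ≠ 0 := by
    rw [ae_iff]
    have h0 : {x : ℝ | ¬ x ≠ 0} = {0} := by ext y; simp
    rw [h0]; exact measure_singleton 0
  have hIicneg : ∀ x : ℝ, x < 0 → μ (Iic x) = 0 := fun x h =>
    measure_mono_null (fun y hy => lt_of_le_of_lt hy h) hsupp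
  have hcompl : ∀ x : ℝ, μ (Iic x) + μ (Ioi x) = 1 := by
    intro x
    have h := measure_add_measure_compl (μ := μ) (measurableSet_Iic (a := x))
    rwa [compl_Iic, measure_univ] at h
  have hmain : ∫⁻ p, (μ (Iic p) * (∫⁻ x in Ioi p, μ (Ioi x) ∂volume)
      + μ (Ioi p) * (∫⁻ x in Ioc (0:ℝ) p, μ (Iic x) ∂volume)) ∂μ = I / 2 := by
    rw [lintegral_add_left (f := fun p => μ (Iic p) * ∫⁻ x in Ioi p, μ (Ioi x) ∂volume) ((aux_mIic μ).mul hmeasT), aux_term1 μ, aux_term2 μ]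
    have h1 : ∫⁻ x, μ (Ioi x) * ((μ (Iic x)) ^ 2 / 2) ∂volume
        = ∫⁻ x, Set.indicator (Ioi (0:ℝ))
            (fun x => μ (Ioi x) * ((μ (Iic x)) ^ 2 / 2)) x ∂volume := by
      apply lintegral_congr_ae
      filter_upwards [hae0] with x hx
      rcases lt_trichotomy x 0 with h | h | h
      · rw [Set.indicator_of_notMem (by simpa using h.le.not_gt), hIicneg x h]
        simp
      · exact absurd h hx
      · rw [Set.indicator_of_mem (mem_Ioi.2 h)]
    rw [h1, lintegral_indicator measurableSet_Ioi, lintegral_indicator measurableSet_Ioi,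
      ← lintegral_add_left (f := fun x => μ (Ioi x) * ((μ (Iic x)) ^ 2 / 2)) ((aux_mIoi μ).mul (((aux_mIic μ).pow_const 2).div_const 2))]
    have h2 : ∫⁻ x in Ioi (0:ℝ), (μ (Ioi x) * ((μ (Iic x)) ^ 2 / 2)
        + μ (Iic x) * ((μ (Ioi x)) ^ 2 / 2)) ∂volume
        = ∫⁻ x in Ioi (0:ℝ), μ (Iic x) * μ (Ioi x) / 2 ∂volume := by
      apply lintegral_congr
      intro x
      exact aux_alg (μ (Iic x)) (μ (Ioi x)) (hcompl x)
    rw [h2]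
    simp_rw [div_eq_mul_inv]
    rw [lintegral_mul_const' _ _ (by norm_num)]
  have hR1 : ∫ x in Ioi (0:ℝ), F x * (1 - F x) = I.toReal := by
    rw [integral_eq_lintegral_of_nonneg_ae (f := fun x => F x * (1 - F x))
      (ae_of_all _ fun x => by
        simpa using mul_nonneg (hF0 x) (by linarith [hFle x] : (0:ℝ) ≤ 1 - F x))
      (hcont.mul (continuous_const.sub hcont)).aestronglyMeasurable]
    congr 1
    apply lintegral_congr
    intro x
    rw [ENNReal.ofReal_mul (hF0 x), hFeq, h1Feq]
  have hR2 : ∫ q : ℝ × ℝ, max (q.1 - q.2) 0 ∂(μ.prod μ) = I.toReal := by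
    rw [integral_eq_lintegral_of_nonneg_ae (f := fun q : ℝ × ℝ => max (q.1 - q.2) 0)
      (ae_of_all _ fun q => by simpa using le_max_right (q.1 - q.2) (0:ℝ))
      ((continuous_fst.sub continuous_snd).max continuous_const).aestronglyMeasurable,
      aux_max μ]
    congr 1
    have h1 : ∫⁻ x, μ (Iic x) * μ (Ioi x) ∂volume
        = ∫⁻ x, Set.indicator (Ioi (0:ℝ)) (fun x => μ (Iic x) * μ (Ioi x)) x ∂volume := by
      apply lintegral_congr_ae
      filter_upwards [hae0] with x hx
      rcases lt_trichotomy x 0 with h | h | h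
      · rw [Set.indicator_of_notMem (by simpa using h.le.not_gt), hIicneg x h, zero_mul]
      · exact absurd h hx
      · rw [Set.indicator_of_mem (mem_Ioi.2 h)]
    rw [h1, lintegral_indicator measurableSet_Ioi]
  constructor
  · rw [hLHS1, hmain, hR1, ENNReal.toReal_div]
    norm_num
    ring
  · rw [hLHS1, hmain, hR2, ENNReal.toReal_div]
    norm_num
    ring
end

section
/- Posting a sample from F as the price achieves at least 3/4 of the optimal welfare in the symmetric setting: for any continuous CDF F of a nonnegative random variable with finite positive mean μ, (μ + (1/2)·∫_0^∞ F(x)(1-F(x)) dx) / (μ + ∫_0^∞ F(x)(1-F(x)) dx) ≥ 3/4. -/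
open MeasureTheory Set Filter

/-- Posting a sample from `F` as the price achieves at least `3/4` of the optimal welfare in
the symmetric setting: for any continuous CDF `F` of a nonnegative random variable with
finite positive mean `μ`,
`(μ + (1/2)·∫_0^∞ F(1-F)) / (μ + ∫_0^∞ F(1-F)) ≥ 3/4`. -/
theorem stmt_8 (F : ℝ → ℝ) (hcont : Continuous F) (hmono : Monotone F)
    (h01 : ∀ x, 0 ≤ F x ∧ F x ≤ 1)
    (hint : IntegrableOn (fun x => 1 - F x) (Set.Ioi 0))
    (μ : ℝ) (hμ : μ = ∫ x in Set.Ioi (0:ℝ), (1 - F x)) (hpos : 0 < μ) :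
    (μ + (1/2) * ∫ x in Set.Ioi (0:ℝ), F x * (1 - F x))
      / (μ + ∫ x in Set.Ioi (0:ℝ), F x * (1 - F x)) ≥ 3/4 := by
  set I := ∫ x in Set.Ioi (0:ℝ), F x * (1 - F x) with hI
  have hintFG : IntegrableOn (fun x => F x * (1 - F x)) (Set.Ioi 0) := by
    apply Integrable.mono' hint
      ((hcont.mul (continuous_const.sub hcont)).aestronglyMeasurable)
    filter_upwards with x
    have h := h01 x
    simp only [Pi.mul_apply, Pi.sub_apply]
    rw [Real.norm_eq_abs, abs_of_nonneg (by nlinarith)]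
    nlinarith
  have hInn : 0 ≤ I := by
    apply setIntegral_nonneg measurableSet_Ioi
    intro x _
    have h := h01 x; nlinarith
  have hIle : I ≤ μ := by
    rw [hμ, hI]
    apply setIntegral_mono_on hintFG hint measurableSet_Ioi
    intro x _
    have h := h01 x; nlinarith
  rw [ge_iff_le, le_div_iff₀ (by linarith)]
  linarith
end

section
/- For the family of CDFs F_r(x) = min(x^r, 1) on [0,1] parameterized by r > 0, the welfare ratio (μ_r + (1/2)∫_0^1 x^r(1-x^r) dx)/(μ_r + ∫_0^1 x^r(1-x^r) dx), where μ_r = r/(r+1), tends to 3/4 as r → 0⁺. Hence the 3/4 bound for the single-sample mechanism is tight. -/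
open MeasureTheory Set Filter

lemma integral_val (r : ℝ) (hr : 0 < r) :
    (∫ x in (0:ℝ)..1, x ^ r * (1 - x ^ r)) = 1/(r+1) - 1/(2*r+1) := by
  have hcongr : (∫ x in (0:ℝ)..1, x ^ r * (1 - x ^ r))
      = ∫ x in (0:ℝ)..1, (x ^ r - x ^ (2*r)) := by
    apply intervalIntegral.integral_congr
    intro x hx
    rw [Set.uIcc_of_le (by norm_num : (0:ℝ) ≤ 1)] at hx
    have hx0 : (0:ℝ) ≤ x := hx.1
    have : x ^ (2*r) = x ^ r * x ^ r := by
      rw [two_mul, Real.rpow_add' hx0 (by linarith)]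
    simp only [this]; ring
  have h1 : (-1:ℝ) < r := by linarith
  have h2 : (-1:ℝ) < 2*r := by linarith
  have i1 : IntervalIntegrable (fun x : ℝ => x ^ r) MeasureTheory.volume 0 1 :=
    intervalIntegral.intervalIntegrable_rpow (Or.inl hr.le)
  have i2 : IntervalIntegrable (fun x : ℝ => x ^ (2*r)) MeasureTheory.volume 0 1 :=
    intervalIntegral.intervalIntegrable_rpow (Or.inl (by linarith))
  rw [hcongr, intervalIntegral.integral_sub i1 i2,
    integral_rpow (Or.inl h1), integral_rpow (Or.inl h2)]
  rw [Real.one_rpow, Real.one_rpow, Real.zero_rpow (by linarith), Real.zero_rpow (by linarith)]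
  ring

/-- For the family of CDFs `F_r(x) = min(x^r, 1)` with mean `μ_r = r/(r+1)`, the welfare
ratio `(μ_r + (1/2)∫_0^1 x^r(1-x^r) dx)/(μ_r + ∫_0^1 x^r(1-x^r) dx)` tends to `3/4` as
`r → 0⁺`; hence the `3/4` bound for the single-sample mechanism is tight. -/
theorem stmt_9 :
    Tendsto (fun r : ℝ =>
        (r/(r+1) + (1/2) * ∫ x in (0:ℝ)..1, x ^ r * (1 - x ^ r))
          / (r/(r+1) + ∫ x in (0:ℝ)..1, x ^ r * (1 - x ^ r)))
      (nhdsWithin 0 (Set.Ioi 0)) (nhds (3/4)) := by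
  have key : Tendsto (fun r : ℝ => (4*r+3)/(4*(r+1)))
      (nhdsWithin 0 (Set.Ioi 0)) (nhds (3/4)) := by
    have : Tendsto (fun r : ℝ => (4*r+3)/(4*(r+1))) (nhds 0) (nhds (3/4)) := by
      have := (ContinuousAt.div (by fun_prop) (by fun_prop)
        (by norm_num : (4:ℝ)*((0:ℝ)+1) ≠ 0) :
        ContinuousAt (fun r : ℝ => (4*r+3)/(4*(r+1))) 0)
      convert this.tendsto using 2 <;> norm_num
    exact this.mono_left nhdsWithin_le_nhds
  apply key.congr'
  filter_upwards [self_mem_nhdsWithin] with r hr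
  have hr' : (0:ℝ) < r := hr
  rw [integral_val r hr']
  have h1 : r + 1 ≠ 0 := by linarith
  have h2 : 2*r + 1 ≠ 0 := by linarith
  have hnum : r/(r+1) + (1/2) * (1/(r+1) - 1/(2*r+1)) = r*(4*r+3)/(2*(r+1)*(2*r+1)) := by
    field_simp; ring
  have hden : r/(r+1) + (1/(r+1) - 1/(2*r+1)) = 2*r/(2*r+1) := by
    field_simp; ring
  rw [hnum, hden]
  rw [div_div_div_eq]
  rw [div_eq_div_iff (by positivity) (by positivity)]
  ring
end

section
/- Posting the mean maximizes welfare in symmetric bilateral trade: for the function W(p) = μ·(1+F(p)) − p·F(p) + ∫_0^p F(x) dx, where μ is the mean of F, one has W(μ) ≥ W(p) for all p ≥ 0. -/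
open MeasureTheory Set Filter

/-- Posting the mean maximizes welfare in symmetric bilateral trade: for
`W(p) = μ·(1+F(p)) − p·F(p) + ∫_0^p F(x) dx`, where `μ` is the mean of the CDF `F` of a
nonnegative random variable, one has `W(μ) ≥ W(p)` for all `p ≥ 0`. -/
theorem stmt_11 (F : ℝ → ℝ) (hmono : Monotone F)
    (h01 : ∀ x, 0 ≤ F x ∧ F x ≤ 1)
    (hint : IntegrableOn (fun x => 1 - F x) (Set.Ioi 0))
    (μ : ℝ) (hμ : μ = ∫ x in Set.Ioi (0:ℝ), (1 - F x)) (hpos : 0 < μ)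
    (p : ℝ) (hp : 0 ≤ p) :
    μ * (1 + F p) - p * F p + ∫ x in (0:ℝ)..p, F x
      ≤ μ * (1 + F μ) - μ * F μ + ∫ x in (0:ℝ)..μ, F x := by
  have hFi : ∀ a b : ℝ, IntervalIntegrable F volume a b := fun a b =>
    (hmono.monotoneOn _).intervalIntegrable
  have hsplit : (∫ x in (0:ℝ)..p, F x) + (∫ x in p..μ, F x) = ∫ x in (0:ℝ)..μ, F x :=
    intervalIntegral.integral_add_adjacent_intervals (hFi 0 p) (hFi p μ)
  have key : (μ - p) * F p ≤ ∫ x in p..μ, F x := by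
    rcases le_total p μ with h | h
    · have : (∫ x in p..μ, (F p : ℝ)) ≤ ∫ x in p..μ, F x := by
        apply intervalIntegral.integral_mono_on h intervalIntegrable_const (hFi p μ)
        intro x hx; exact hmono hx.1
      simpa using this
    · have h1 : (∫ x in μ..p, F x) ≤ ∫ x in μ..p, (F p : ℝ) := by
        apply intervalIntegral.integral_mono_on h (hFi μ p) intervalIntegrable_const
        intro x hx; exact hmono hx.2
      simp only [intervalIntegral.integral_const, smul_eq_mul] at h1
      rw [intervalIntegral.integral_symm]
      linarith
  linarith
end

section
/- Welfare-loss bound (Lemma on q,r): if q ≤ 1/5 and r ≤ 1/5, then r(1−q) + (1−r)q = 1/2 − 2(1/2−q)(1/2−r) ≤ 8/25; consequently the fixed price p* with q = P[S ≥ p*] ≤ 1/5 and r = E[B·1_{B≤p*}]/E[B] ≤ 1/5 guarantees welfare W(p*;F_S,F_B) ≥ (17/25)·OPT-W(F_S,F_B). -/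
open MeasureTheory Set Filter

/-- Pointwise inequality: for nonnegative `b, s`,
`max b s ≤ s + (b-s)·1_{p<b, s≤p} + b·1_{b≤p}·1_{s<p} + b·1_{p<b}·1_{p≤s}`. -/
lemma stmt_18_aux (p b s : ℝ) (hb : 0 ≤ b) (hs : 0 ≤ s) :
    max b s ≤ s + (b - s) * (if p < b ∧ s ≤ p then (1:ℝ) else 0)
      + (Set.Iic p).indicator id b * (Set.Iio p).indicator (fun _ => (1:ℝ)) s
      + (Set.Ioi p).indicator id b * (Set.Ici p).indicator (fun _ => (1:ℝ)) s := by
  simp only [Set.indicator_apply, Set.mem_Iic, Set.mem_Iio, Set.mem_Ioi, Set.mem_Ici, id]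
  rcases le_or_gt b p with hbp | hbp
  · rw [if_neg (by rintro ⟨h, -⟩; exact absurd h (not_lt.mpr hbp))]
    split_ifs <;> simp only [max_le_iff] <;> exact ⟨by nlinarith, by nlinarith⟩
  · rcases le_or_gt s p with hsp | hsp
    · rw [if_pos ⟨hbp, hsp⟩]
      split_ifs <;> simp only [max_le_iff] <;> exact ⟨by nlinarith, by nlinarith⟩
    · rw [if_neg (by rintro ⟨-, h⟩; exact absurd h (not_le.mpr hsp))]
      split_ifs <;> simp only [max_le_iff] <;> exact ⟨by nlinarith, by nlinarith⟩

/-- Welfare-loss bound: if `q ≤ 1/5` and `r ≤ 1/5` then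
`r(1−q) + (1−r)q = 1/2 − 2(1/2−q)(1/2−r) ≤ 8/25`; consequently a fixed price `p*` with
`P[S ≥ p*] ≤ 1/5` and `E[B·1_{B≤p*}]/E[B] ≤ 1/5` guarantees welfare
`W(p*;F_S,F_B) ≥ (17/25)·OPT-W(F_S,F_B)`. -/
theorem stmt_18 :
    (∀ q r : ℝ, 0 ≤ q → q ≤ 1/5 → 0 ≤ r → r ≤ 1/5 →
      r * (1 - q) + (1 - r) * q = 1/2 - 2 * (1/2 - q) * (1/2 - r)
      ∧ r * (1 - q) + (1 - r) * q ≤ 8/25)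
    ∧ ∀ (μS μB : Measure ℝ), IsProbabilityMeasure μS → IsProbabilityMeasure μB →
        μS (Set.Iio 0) = 0 → μB (Set.Iio 0) = 0 →
        Integrable id μS → Integrable id μB →
        0 < (∫ b, b ∂μB) →
        ∀ p : ℝ, (μS (Set.Ici p)).toReal ≤ 1/5 →
          (∫ b in Set.Iic p, b ∂μB) / (∫ b, b ∂μB) ≤ 1/5 →
          (17/25) * (∫ q : ℝ × ℝ, max q.1 q.2 ∂(μB.prod μS))
            ≤ ∫ q : ℝ × ℝ, (q.2 + (q.1 - q.2) *
                Set.indicator {q : ℝ × ℝ | p < q.1 ∧ q.2 ≤ p} (fun _ => (1:ℝ)) q)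
              ∂(μB.prod μS) := by
  constructor
  · intro q r hq0 hq hr0 hr
    constructor
    · ring
    · nlinarith
  · intro μS μB hμS hμB hS0 hB0 hiS hiB hEB p hq hr
    have hBae : ∀ᵐ b ∂μB, 0 ≤ b := by
      rw [ae_iff]
      convert hB0 using 2
      ext x; simp [Set.mem_Iio]
    have hSae : ∀ᵐ s ∂μS, 0 ≤ s := by
      rw [ae_iff]
      convert hS0 using 2
      ext x; simp [Set.mem_Iio]
    set ν := μB.prod μS with hν
    have hνprob : IsProbabilityMeasure ν := by infer_instance
    -- a.e. nonnegativity on the product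
    have hae1 : ∀ᵐ q : ℝ × ℝ ∂ν, 0 ≤ q.1 := by
      rw [ae_iff]
      have : {q : ℝ × ℝ | ¬ 0 ≤ q.1} = (Set.Iio 0) ×ˢ (Set.univ : Set ℝ) := by
        ext q; simp [Set.mem_Iio, not_le]
      rw [this, hν, Measure.prod_prod, hB0, zero_mul]
    have hae2 : ∀ᵐ q : ℝ × ℝ ∂ν, 0 ≤ q.2 := by
      rw [ae_iff]
      have : {q : ℝ × ℝ | ¬ 0 ≤ q.2} = (Set.univ : Set ℝ) ×ˢ (Set.Iio 0) := by
        ext q; simp [Set.mem_Iio, not_le]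
      rw [this, hν, Measure.prod_prod, hS0, mul_zero]
    -- basic integrabilities
    have hfst : Integrable (fun q : ℝ × ℝ => q.1) ν := by
      have := hiB.mul_prod (integrable_const (1:ℝ)) (ν := μS)
      simpa using this
    have hsnd : Integrable (fun q : ℝ × ℝ => q.2) ν := by
      have := (integrable_const (1:ℝ)).mul_prod hiS (μ := μB)
      simpa using this
    have hmax : Integrable (fun q : ℝ × ℝ => max q.1 q.2) ν := hfst.sup hsnd
    set A : Set (ℝ × ℝ) := {q : ℝ × ℝ | p < q.1 ∧ q.2 ≤ p} with hA
    have hAmeas : MeasurableSet A := by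
      have : A = (Set.Ioi p) ×ˢ (Set.Iic p) := by
        ext q; simp [hA, Set.mem_Ioi, Set.mem_Iic, Set.mem_prod]
      rw [this]; exact measurableSet_Ioi.prod measurableSet_Iic
    have hWeq : (fun q : ℝ × ℝ => q.2 + (q.1 - q.2) * A.indicator (fun _ => (1:ℝ)) q)
        = fun q : ℝ × ℝ => q.2 + A.indicator (fun q : ℝ × ℝ => q.1 - q.2) q := by
      funext q
      by_cases h : q ∈ A <;> simp [Set.indicator_apply, h]
    have hW : Integrable (fun q : ℝ × ℝ => q.2 + (q.1 - q.2) *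
        A.indicator (fun _ => (1:ℝ)) q) ν := by
      rw [hWeq]
      exact hsnd.add (((hfst.sub hsnd).indicator hAmeas))
    have hiB1 : Integrable ((Set.Iic p).indicator id) μB := hiB.indicator measurableSet_Iic
    have hiB2 : Integrable ((Set.Ioi p).indicator id) μB := hiB.indicator measurableSet_Ioi
    have hiS1 : Integrable ((Set.Iio p).indicator (fun _ => (1:ℝ))) μS :=
      (integrable_const _).indicator measurableSet_Iio
    have hiS2 : Integrable ((Set.Ici p).indicator (fun _ => (1:ℝ))) μS :=
      (integrable_const _).indicator measurableSet_Ici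
    have hg1 : Integrable (fun q : ℝ × ℝ =>
        (Set.Iic p).indicator id q.1 * (Set.Iio p).indicator (fun _ => (1:ℝ)) q.2) ν :=
      hiB1.mul_prod hiS1
    have hg2 : Integrable (fun q : ℝ × ℝ =>
        (Set.Ioi p).indicator id q.1 * (Set.Ici p).indicator (fun _ => (1:ℝ)) q.2) ν :=
      hiB2.mul_prod hiS2
    -- the pointwise inequality a.e.
    have hpt : ∀ᵐ q : ℝ × ℝ ∂ν, max q.1 q.2 ≤
        (q.2 + (q.1 - q.2) * A.indicator (fun _ => (1:ℝ)) q)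
        + ((Set.Iic p).indicator id q.1 * (Set.Iio p).indicator (fun _ => (1:ℝ)) q.2
          + (Set.Ioi p).indicator id q.1 * (Set.Ici p).indicator (fun _ => (1:ℝ)) q.2) := by
      filter_upwards [hae1, hae2] with q h1 h2
      have := stmt_18_aux p q.1 q.2 h1 h2
      have hind : A.indicator (fun _ => (1:ℝ)) q = if p < q.1 ∧ q.2 ≤ p then (1:ℝ) else 0 := by
        simp [Set.indicator_apply, hA]
      rw [hind]
      linarith
    -- integrate the inequality
    have hineq : ∫ q : ℝ × ℝ, max q.1 q.2 ∂ν ≤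
        (∫ q : ℝ × ℝ, (q.2 + (q.1 - q.2) * A.indicator (fun _ => (1:ℝ)) q) ∂ν)
        + ((∫ q : ℝ × ℝ, (Set.Iic p).indicator id q.1 *
              (Set.Iio p).indicator (fun _ => (1:ℝ)) q.2 ∂ν)
          + (∫ q : ℝ × ℝ, (Set.Ioi p).indicator id q.1 *
              (Set.Ici p).indicator (fun _ => (1:ℝ)) q.2 ∂ν)) := by
      have hg12 : Integrable (fun q : ℝ × ℝ =>
          (Set.Iic p).indicator id q.1 * (Set.Iio p).indicator (fun _ => (1:ℝ)) q.2
          + (Set.Ioi p).indicator id q.1 * (Set.Ici p).indicator (fun _ => (1:ℝ)) q.2) ν :=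
        hg1.add hg2
      have hWg : Integrable (fun q : ℝ × ℝ =>
          (q.2 + (q.1 - q.2) * A.indicator (fun _ => (1:ℝ)) q)
          + ((Set.Iic p).indicator id q.1 * (Set.Iio p).indicator (fun _ => (1:ℝ)) q.2
            + (Set.Ioi p).indicator id q.1 * (Set.Ici p).indicator (fun _ => (1:ℝ)) q.2)) ν :=
        hW.add hg12
      calc ∫ q : ℝ × ℝ, max q.1 q.2 ∂ν
          ≤ ∫ q : ℝ × ℝ, ((q.2 + (q.1 - q.2) * A.indicator (fun _ => (1:ℝ)) q)
            + ((Set.Iic p).indicator id q.1 * (Set.Iio p).indicator (fun _ => (1:ℝ)) q.2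
              + (Set.Ioi p).indicator id q.1 * (Set.Ici p).indicator (fun _ => (1:ℝ)) q.2)) ∂ν :=
            integral_mono_ae hmax hWg hpt
        _ = _ := by rw [integral_add hW hg12, integral_add hg1 hg2]
    -- compute the error terms by Fubini
    have hcomp1 : (∫ q : ℝ × ℝ, (Set.Iic p).indicator id q.1 *
          (Set.Iio p).indicator (fun _ => (1:ℝ)) q.2 ∂ν)
        = (∫ b in Set.Iic p, b ∂μB) * (μS (Set.Iio p)).toReal := by
      rw [hν, integral_prod_mul]
      congr 1
      · rw [integral_indicator measurableSet_Iic]; rfl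
      · rw [integral_indicator measurableSet_Iio]
        simp [Measure.restrict_apply_univ]; rfl
    have hcomp2 : (∫ q : ℝ × ℝ, (Set.Ioi p).indicator id q.1 *
          (Set.Ici p).indicator (fun _ => (1:ℝ)) q.2 ∂ν)
        = (∫ b in Set.Ioi p, b ∂μB) * (μS (Set.Ici p)).toReal := by
      rw [hν, integral_prod_mul]
      congr 1
      · rw [integral_indicator measurableSet_Ioi]; rfl
      · rw [integral_indicator measurableSet_Ici]
        simp [Measure.restrict_apply_univ]; rfl
    -- max integral dominates E[B]
    have hMgeE : (∫ b, b ∂μB) ≤ ∫ q : ℝ × ℝ, max q.1 q.2 ∂ν := by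
      have h1 : (∫ q : ℝ × ℝ, q.1 ∂ν) = ∫ b, b ∂μB := by
        rw [hν]
        have h := integral_prod_mul (μ := μB) (ν := μS) id (fun _ : ℝ => (1:ℝ))
        simpa using h
      rw [← h1]
      exact integral_mono hfst hmax (fun q => le_max_left _ _)
    -- arithmetic bookkeeping
    set E := (∫ b, b ∂μB) with hE
    set I1 := (∫ b in Set.Iic p, b ∂μB) with hI1
    set I2 := (∫ b in Set.Ioi p, b ∂μB) with hI2
    have hI1nn : 0 ≤ I1 := setIntegral_nonneg_of_ae hBae
    have hI2nn : 0 ≤ I2 := setIntegral_nonneg_of_ae hBae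
    have hsum : I1 + I2 = E := by
      rw [hI1, hI2, hE]
      have := integral_add_compl (measurableSet_Iic (a := p)) hiB
      simpa [Set.compl_Iic] using this
    have hI1le : I1 ≤ E / 5 := by
      rw [div_le_iff₀ hEB] at hr; linarith
    set qv := (μS (Set.Ici p)).toReal with hqv
    have hqnn : 0 ≤ qv := ENNReal.toReal_nonneg
    have hcompl : (μS (Set.Iio p)).toReal = 1 - qv := by
      have h := prob_compl_eq_one_sub (μ := μS) (measurableSet_Ici (a := p))
      rw [Set.compl_Ici] at h
      rw [h, hqv]
      rw [ENNReal.toReal_sub_of_le prob_le_one (by simp)]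
      simp
    rw [hcomp1, hcomp2, hcompl] at hineq
    -- final arithmetic
    set M := ∫ q : ℝ × ℝ, max q.1 q.2 ∂ν with hM
    set W := ∫ q : ℝ × ℝ, (q.2 + (q.1 - q.2) * A.indicator (fun _ => (1:ℝ)) q) ∂ν with hWdef
    have hq15 : qv ≤ 1/5 := hq
    have herr : I1 * (1 - qv) + I2 * qv ≤ 8/25 * E := by nlinarith
    have : M ≤ W + 8/25 * E := by linarith
    nlinarith
end

section
/- In the quantile-information game, against nature's strategy where y = 1 with probability 1/e and otherwise y has density 1/(e·y²) on [1/e, 1], every pure strategy x ∈ [0,1] of the designer yields expected payoff E[V(x,y)] ≤ 1 − 1/e, where V(x,y) = (1−y) + x·1_{x<y}. Specifically, E[V(x,y)] = 1 − 2/e + x for x ∈ [0,1/e] and E[V(x,y)] = 1 − 1/e for x ∈ [1/e, 1). -/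
open MeasureTheory Set Filter
open scoped NNReal ENNReal Interval

/-- Nature's mixed strategy: `y = 1` with probability `1/e`, and otherwise `y` has density
`1/(e·y²)` on `(1/e, 1)`. -/
noncomputable def natureMeasure : Measure ℝ :=
  ENNReal.ofReal (1 / Real.exp 1) • Measure.dirac 1
  + (volume.restrict (Set.Ioo (1 / Real.exp 1) 1)).withDensity
      (fun y => ENNReal.ofReal (1 / (Real.exp 1 * y ^ 2)))

noncomputable def g (x y : ℝ) : ℝ := (1 - y) + x * Set.indicator (Set.Ioi x) (fun _ => (1:ℝ)) y

lemma g_meas (x : ℝ) : Measurable (g x) := by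
  unfold g
  exact (measurable_const.sub measurable_id).add
    (measurable_const.mul ((measurable_indicator_const_iff 1).2 measurableSet_Ioi))

lemma ind_mem {x y : ℝ} (h : x < y) : Set.indicator (Set.Ioi x) (fun _ => (1:ℝ)) y = 1 :=
  Set.indicator_of_mem h _

lemma ind_not_mem {x y : ℝ} (h : ¬ x < y) : Set.indicator (Set.Ioi x) (fun _ => (1:ℝ)) y = 0 :=
  Set.indicator_of_notMem h _

lemma g_bound {x y : ℝ} (hx : 0 ≤ x) (hy0 : 0 ≤ y) (hy1 : y ≤ 1) : |g x y| ≤ 1 + x := by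
  unfold g
  by_cases h : x < y
  · rw [ind_mem h]; rw [abs_le]; constructor <;> nlinarith
  · rw [ind_not_mem h]; rw [abs_le]; constructor <;> nlinarith

lemma dens_nonneg (y : ℝ) : 0 ≤ 1 / (Real.exp 1 * y ^ 2) :=
  div_nonneg zero_le_one (mul_nonneg (Real.exp_pos 1).le (sq_nonneg y))

lemma dens_meas : Measurable fun y : ℝ => 1 / (Real.exp 1 * y ^ 2) :=
  measurable_const.div ((measurable_id.pow_const 2).const_mul _)

lemma hbd (x : ℝ) (hx0 : 0 ≤ x) :
    Integrable (fun y => (1 / (Real.exp 1 * y ^ 2)) * g x y)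
      (volume.restrict (Set.Ioo (1 / Real.exp 1) 1)) := by
  have hE := Real.exp_pos 1
  refine (integrable_const (Real.exp 1 * (1 + x))).mono'
    ((dens_meas.mul (g_meas x)).aestronglyMeasurable) ?_
  rw [ae_restrict_iff' measurableSet_Ioo]
  refine Eventually.of_forall fun y hy => ?_
  obtain ⟨hy1, hy2⟩ := hy
  have hy0 : 0 < y := lt_trans (by positivity) hy1
  have h1 : 1 / (Real.exp 1 * y ^ 2) ≤ Real.exp 1 := by
    rw [div_le_iff₀ (by positivity)]
    have : 1 < Real.exp 1 * y := by
      rw [div_lt_iff₀ hE] at hy1; linarith [hy1]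
    nlinarith
  have h2 : |g x y| ≤ 1 + x := g_bound hx0 hy0.le hy2.le
  rw [norm_mul, Real.norm_eq_abs, Real.norm_eq_abs, abs_of_nonneg (dens_nonneg y)]
  exact mul_le_mul h1 h2 (abs_nonneg _) hE.le

lemma split (x : ℝ) (hx0 : 0 ≤ x) :
    ∫ y, g x y ∂natureMeasure
      = (g x 1) / Real.exp 1
        + ∫ y in Set.Ioo (1 / Real.exp 1) 1, (1 / (Real.exp 1 * y ^ 2)) * g x y := by
  have hmeas : Measurable fun y : ℝ => Real.toNNReal (1 / (Real.exp 1 * y ^ 2)) :=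
    dens_meas.real_toNNReal
  have dens_eq : (fun y : ℝ => ENNReal.ofReal (1 / (Real.exp 1 * y ^ 2)))
      = fun y => ((Real.toNNReal (1 / (Real.exp 1 * y ^ 2)) : ℝ≥0) : ℝ≥0∞) := rfl
  have hint2 : Integrable (g x)
      ((volume.restrict (Set.Ioo (1 / Real.exp 1) 1)).withDensity
        (fun y => ENNReal.ofReal (1 / (Real.exp 1 * y ^ 2)))) := by
    rw [integrable_withDensity_iff (by rw [dens_eq]; exact hmeas.coe_nnreal_ennreal)
      (Eventually.of_forall fun y => ENNReal.ofReal_lt_top)]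
    refine (hbd x hx0).congr (Eventually.of_forall fun y => ?_)
    show 1 / (Real.exp 1 * y ^ 2) * g x y
      = g x y * (ENNReal.ofReal (1 / (Real.exp 1 * y ^ 2))).toReal
    rw [ENNReal.toReal_ofReal (dens_nonneg y), mul_comm]
  have hint1 : Integrable (g x) (ENNReal.ofReal (1 / Real.exp 1) • Measure.dirac 1) := by
    refine Integrable.smul_measure ?_ ENNReal.ofReal_ne_top
    refine (integrable_const (g x 1)).congr ?_
    rw [ae_dirac_eq]
    exact eventually_pure.2 rfl
  rw [natureMeasure, integral_add_measure hint1 hint2, integral_smul_measure,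
    integral_dirac, dens_eq, integral_withDensity_eq_integral_smul hmeas]
  congr 1
  · rw [ENNReal.toReal_ofReal (by positivity), smul_eq_mul, one_div, inv_mul_eq_div]
  · refine integral_congr_ae (Eventually.of_forall fun y => ?_)
    show (Real.toNNReal (1 / (Real.exp 1 * y ^ 2))) • g x y
      = 1 / (Real.exp 1 * y ^ 2) * g x y
    rw [NNReal.smul_def, Real.coe_toNNReal _ (dens_nonneg y), smul_eq_mul]

lemma not_zero_mem {a : ℝ} (ha : 0 < a) : (0:ℝ) ∉ [[a, (1:ℝ)]] := by
  rw [Set.mem_uIcc]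
  push_neg
  constructor
  · intro h; linarith
  · intro h; linarith

lemma int_dens {a : ℝ} (ha : 0 < a) (ha1 : a ≤ 1) :
    ∫ y in Set.Ioo a 1, 1 / (Real.exp 1 * y ^ 2) = (1 / a - 1) / Real.exp 1 := by
  have hE := Real.exp_pos 1
  rw [← integral_Ioc_eq_integral_Ioo, ← intervalIntegral.integral_of_le ha1]
  have : ∀ y ∈ [[a, (1:ℝ)]], 1 / (Real.exp 1 * y ^ 2) = (1 / Real.exp 1) * y ^ (-2 : ℤ) := by
    intro y hy
    rw [zpow_neg, zpow_two, ← sq, one_div, one_div, mul_inv]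
  rw [intervalIntegral.integral_congr this, intervalIntegral.integral_const_mul,
    integral_zpow (Or.inr ⟨by norm_num, not_zero_mem ha⟩)]
  norm_num
  field_simp
  ring

lemma int_main :
    ∫ y in Set.Ioo (1 / Real.exp 1) 1, (1 - y) / (Real.exp 1 * y ^ 2)
      = 1 - 2 / Real.exp 1 := by
  have hE := Real.exp_pos 1
  have ha : (0:ℝ) < 1 / Real.exp 1 := by positivity
  have ha1 : 1 / Real.exp 1 ≤ 1 := by
    rw [div_le_one hE]; exact Real.one_le_exp (by norm_num)
  rw [← integral_Ioc_eq_integral_Ioo, ← intervalIntegral.integral_of_le ha1]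
  have hcongr : ∀ y ∈ [[1 / Real.exp 1, (1:ℝ)]],
      (1 - y) / (Real.exp 1 * y ^ 2)
        = (1 / Real.exp 1) * y ^ (-2 : ℤ) - (1 / Real.exp 1) * (1 / y) := by
    intro y hy
    have hy0 : y ≠ 0 := by
      rw [Set.uIcc_of_le ha1] at hy
      exact ne_of_gt (lt_of_lt_of_le ha hy.1)
    rw [zpow_neg, zpow_two, ← sq]
    field_simp
  rw [intervalIntegral.integral_congr hcongr,
    intervalIntegral.integral_sub
      ((intervalIntegral.intervalIntegrable_zpow (Or.inr (not_zero_mem ha))).const_mul _)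
      ((intervalIntegral.intervalIntegrable_one_div (f := fun y => y) (fun y hy => by
        rw [Set.uIcc_of_le ha1] at hy
        exact ne_of_gt (lt_of_lt_of_le ha hy.1)) continuousOn_id).const_mul _),
    intervalIntegral.integral_const_mul, intervalIntegral.integral_const_mul,
    integral_zpow (Or.inr ⟨by norm_num, not_zero_mem ha⟩),
    integral_one_div (not_zero_mem ha)]
  rw [one_div_one_div, Real.log_exp]
  norm_num
  field_simp
  ring

lemma hE1 : (1:ℝ) < Real.exp 1 := by nlinarith [Real.add_one_le_exp (1:ℝ)]

lemma hinv_pos : (0:ℝ) < 1 / Real.exp 1 := by positivity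

lemma hinv_lt : 1 / Real.exp 1 < 1 := by
  rw [div_lt_one (Real.exp_pos 1)]; exact hE1

lemma contOn_aux {s : Set ℝ} (hs : ∀ y ∈ s, y ≠ 0) (f : ℝ → ℝ) (hf : ContinuousOn f s) :
    ContinuousOn (fun y => f y / (Real.exp 1 * y ^ 2)) s :=
  hf.div (continuousOn_const.mul (continuousOn_pow 2)) fun y hy => by
    have := hs y hy; positivity

lemma i_main : IntegrableOn (fun y => (1 - y) / (Real.exp 1 * y ^ 2))
    (Set.Ioo (1 / Real.exp 1) 1) volume := by
  refine (ContinuousOn.integrableOn_Icc ?_).mono_set Set.Ioo_subset_Icc_self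
  exact contOn_aux (fun y hy => ne_of_gt (lt_of_lt_of_le hinv_pos hy.1)) _
    (continuousOn_const.sub continuousOn_id)

lemma i_dens {a : ℝ} (ha : 0 < a) : IntegrableOn (fun y => 1 / (Real.exp 1 * y ^ 2))
    (Set.Ioo a 1) volume := by
  refine (ContinuousOn.integrableOn_Icc ?_).mono_set Set.Ioo_subset_Icc_self
  exact contOn_aux (fun y hy => ne_of_gt (lt_of_lt_of_le ha hy.1)) _ continuousOn_const

lemma caseA {x : ℝ} (hx0 : 0 ≤ x) (hx1 : x ≤ 1 / Real.exp 1) :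
    ∫ y, g x y ∂natureMeasure = 1 - 2 / Real.exp 1 + x := by
  have hE := Real.exp_pos 1
  have hg1 : g x 1 = x := by
    unfold g
    rw [ind_mem (lt_of_le_of_lt hx1 hinv_lt)]; ring
  rw [split x hx0, hg1]
  have hcg : ∀ y ∈ Set.Ioo (1 / Real.exp 1) 1,
      (1 / (Real.exp 1 * y ^ 2)) * g x y
        = (1 - y) / (Real.exp 1 * y ^ 2) + x * (1 / (Real.exp 1 * y ^ 2)) := by
    intro y hy
    unfold g
    rw [ind_mem (lt_of_le_of_lt hx1 hy.1)]
    ring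
  rw [setIntegral_congr_fun measurableSet_Ioo hcg,
    integral_add i_main ((i_dens hinv_pos).const_mul x),
    integral_const_mul, int_main, int_dens hinv_pos hinv_lt.le, one_div_one_div]
  field_simp
  ring

lemma caseB {x : ℝ} (hx0 : 1 / Real.exp 1 ≤ x) (hx1 : x < 1) :
    ∫ y, g x y ∂natureMeasure = 1 - 1 / Real.exp 1 := by
  have hE := Real.exp_pos 1
  have hxpos : 0 < x := lt_of_lt_of_le hinv_pos hx0
  have hg1 : g x 1 = x := by
    unfold g
    rw [ind_mem hx1]; ring
  rw [split x hxpos.le, hg1]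
  have hcg : ∀ y ∈ Set.Ioo (1 / Real.exp 1) 1,
      (1 / (Real.exp 1 * y ^ 2)) * g x y
        = (1 - y) / (Real.exp 1 * y ^ 2)
          + Set.indicator (Set.Ioi x) (fun y => x * (1 / (Real.exp 1 * y ^ 2))) y := by
    intro y hy
    unfold g
    by_cases h : x < y <;> simp [Set.indicator_apply, Set.mem_Ioi, h] <;> ring
  have hinter : Set.Ioo (1 / Real.exp 1) 1 ∩ Set.Ioi x = Set.Ioo x 1 := by
    ext y
    simp only [Set.mem_inter_iff, Set.mem_Ioo, Set.mem_Ioi]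
    constructor
    · rintro ⟨⟨_, h2⟩, h3⟩; exact ⟨h3, h2⟩
    · rintro ⟨h1, h2⟩; exact ⟨⟨lt_of_le_of_lt hx0 h1, h2⟩, h1⟩
  rw [setIntegral_congr_fun measurableSet_Ioo hcg,
    integral_add i_main (((i_dens hinv_pos).const_mul x).indicator measurableSet_Ioi),
    int_main, setIntegral_indicator measurableSet_Ioi, hinter,
    integral_const_mul, int_dens hxpos hx1.le]
  field_simp
  ring

lemma caseC : ∫ y, g 1 y ∂natureMeasure = 1 - 2 / Real.exp 1 := by
  have hg1 : g 1 1 = 0 := by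
    unfold g
    rw [ind_not_mem (lt_irrefl 1)]; ring
  rw [split 1 zero_le_one, hg1]
  have hcg : ∀ y ∈ Set.Ioo (1 / Real.exp 1) 1,
      (1 / (Real.exp 1 * y ^ 2)) * g 1 y = (1 - y) / (Real.exp 1 * y ^ 2) := by
    intro y hy
    unfold g
    rw [ind_not_mem (not_lt.2 hy.2.le)]
    ring
  rw [setIntegral_congr_fun measurableSet_Ioo hcg, int_main]
  ring



/-- Against nature's strategy, every pure strategy `x ∈ [0,1]` of the designer yields
expected payoff `E[V(x,y)] ≤ 1 − 1/e`, where `V(x,y) = (1−y) + x·1_{x<y}`; specifically,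
`E[V(x,y)] = 1 − 2/e + x` for `x ∈ [0,1/e]` and `E[V(x,y)] = 1 − 1/e` for `x ∈ [1/e, 1)`. -/
theorem stmt_19 :
    (∀ x ∈ Set.Icc (0:ℝ) 1,
      (∫ y, ((1 - y) + x * Set.indicator (Set.Ioi x) (fun _ => (1:ℝ)) y) ∂natureMeasure)
        ≤ 1 - 1 / Real.exp 1)
    ∧ (∀ x ∈ Set.Icc (0:ℝ) (1 / Real.exp 1),
      (∫ y, ((1 - y) + x * Set.indicator (Set.Ioi x) (fun _ => (1:ℝ)) y) ∂natureMeasure)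
        = 1 - 2 / Real.exp 1 + x)
    ∧ (∀ x ∈ Set.Ico (1 / Real.exp 1) (1:ℝ),
      (∫ y, ((1 - y) + x * Set.indicator (Set.Ioi x) (fun _ => (1:ℝ)) y) ∂natureMeasure)
        = 1 - 1 / Real.exp 1) := by
  have hE := Real.exp_pos 1
  refine ⟨fun x hx => ?_, fun x hx => caseA hx.1 hx.2, fun x hx => caseB hx.1 hx.2⟩
  show ∫ y, g x y ∂natureMeasure ≤ 1 - 1 / Real.exp 1
  rcases le_or_gt x (1 / Real.exp 1) with h | h
  · rw [caseA hx.1 h]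
    have h2 : (2:ℝ) / Real.exp 1 = 2 * (1 / Real.exp 1) := by ring
    linarith
  · rcases lt_or_eq_of_le hx.2 with h1 | h1
    · rw [caseB h.le h1]
    · subst h1; rw [caseC]
      have h2 : (2:ℝ) / Real.exp 1 = 2 * (1 / Real.exp 1) := by ring
      linarith [hinv_pos]
end
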